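/- Let A be a symmetric positive semidefinite d×d matrix, let s₀ ≤ d, and suppose there is an integer r with s₀ ≤ r and s₀ + r ≤ d such that κ := sqrt(φ_min(s₀+r, A))·(1 − 3·sqrt(s₀·φ_max(r, A)/(r·φ_min(s₀+r, A)))) > 0. Then for every S ⊂ [d] with |S| ≤ s₀ and every nonzero v ∈ R^d with ‖v(Sᶜ)‖₁ ≤ 3‖v(S)‖₁, one has vᵀAv ≥ κ²·‖v(S̃)‖₂², where S̃ is the union of S with the indices of the r largest-in-absolute-value coordinates of v outside S. -/

import Mathlib

open Finset Matrix

/-- Restricted minimal eigenvalue `φ_min(s, A)`. -/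
noncomputable def phiMin {d : ℕ} (s : ℕ) (A : Matrix (Fin d) (Fin d) ℝ) : ℝ :=
  sInf {x : ℝ | ∃ v : Fin d → ℝ, v ≠ 0 ∧
    (Finset.univ.filter fun i => v i ≠ 0).card ≤ s ∧
    x = (v ⬝ᵥ A.mulVec v) / (∑ i, v i ^ 2)}

/-- Restricted maximal eigenvalue `φ_max(s, A)`. -/
noncomputable def phiMax {d : ℕ} (s : ℕ) (A : Matrix (Fin d) (Fin d) ℝ) : ℝ :=
  sSup {x : ℝ | ∃ v : Fin d → ℝ, v ≠ 0 ∧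
    (Finset.univ.filter fun i => v i ≠ 0).card ≤ s ∧
    x = (v ⬝ᵥ A.mulVec v) / (∑ i, v i ^ 2)}

private lemma sum_sq_pos' {d : ℕ} {v : Fin d → ℝ} (hv : v ≠ 0) : 0 < ∑ i, v i ^ 2 := by
  rcases Function.ne_iff.mp hv with ⟨i, hi⟩
  have h1 : 0 < v i ^ 2 := lt_of_le_of_ne (sq_nonneg _) (Ne.symm (pow_ne_zero 2 hi))
  exact Finset.sum_pos' (fun j _ => sq_nonneg _) ⟨i, Finset.mem_univ i, h1⟩

private lemma sum_sq_restr' {d : ℕ} (v : Fin d → ℝ) (U : Finset (Fin d)) :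
    ∑ i, (if i ∈ U then v i else 0) ^ 2 = ∑ i ∈ U, v i ^ 2 := by
  have h : ∀ i, (if i ∈ U then v i else 0) ^ 2 = if i ∈ U then v i ^ 2 else 0 := by
    intro i; split <;> simp
  rw [Finset.sum_congr rfl (fun i _ => h i), Finset.sum_ite_mem, Finset.univ_inter]

private lemma sqrt_sum_sq_add' {n : ℕ} (a b : Fin n → ℝ) :
    Real.sqrt (∑ i, (a i + b i) ^ 2) ≤
      Real.sqrt (∑ i, a i ^ 2) + Real.sqrt (∑ i, b i ^ 2) := by
  have hab : ∑ i, a i * b i ≤ Real.sqrt (∑ i, a i ^ 2) * Real.sqrt (∑ i, b i ^ 2) := by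
    have h1 := Finset.sum_mul_sq_le_sq_mul_sq Finset.univ a b
    calc ∑ i, a i * b i ≤ |∑ i, a i * b i| := le_abs_self _
      _ = Real.sqrt ((∑ i, a i * b i) ^ 2) := (Real.sqrt_sq_eq_abs _).symm
      _ ≤ Real.sqrt ((∑ i, a i ^ 2) * ∑ i, b i ^ 2) := Real.sqrt_le_sqrt h1
      _ = _ := Real.sqrt_mul (by positivity) _
  have e1 : Real.sqrt (∑ i, a i ^ 2) ^ 2 = ∑ i, a i ^ 2 := Real.sq_sqrt (by positivity)
  have e2 : Real.sqrt (∑ i, b i ^ 2) ^ 2 = ∑ i, b i ^ 2 := Real.sq_sqrt (by positivity)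
  have hexp : ∑ i, (a i + b i) ^ 2 = ∑ i, a i ^ 2 + 2 * ∑ i, a i * b i + ∑ i, b i ^ 2 := by
    rw [Finset.mul_sum, ← Finset.sum_add_distrib, ← Finset.sum_add_distrib]
    exact Finset.sum_congr rfl fun i _ => by ring
  have key : ∑ i, (a i + b i) ^ 2 ≤
      (Real.sqrt (∑ i, a i ^ 2) + Real.sqrt (∑ i, b i ^ 2)) ^ 2 := by
    nlinarith [Real.sqrt_nonneg (∑ i, a i ^ 2), Real.sqrt_nonneg (∑ i, b i ^ 2)]
  calc Real.sqrt (∑ i, (a i + b i) ^ 2)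
      ≤ Real.sqrt ((Real.sqrt (∑ i, a i ^ 2) + Real.sqrt (∑ i, b i ^ 2)) ^ 2) :=
        Real.sqrt_le_sqrt key
    _ = _ := Real.sqrt_sq (by positivity)

private lemma quadform_eq' {d : ℕ} (B : Matrix (Fin d) (Fin d) ℝ) (x : Fin d → ℝ) :
    x ⬝ᵥ (Bᵀ * B).mulVec x = ∑ i, (B.mulVec x i) ^ 2 := by
  rw [← Matrix.mulVec_mulVec, Matrix.dotProduct_mulVec, Matrix.vecMul_transpose]
  simp [dotProduct, sq]

private lemma restr_support' {d : ℕ} (v : Fin d → ℝ) (U : Finset (Fin d)) :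
    (Finset.univ.filter fun i => (if i ∈ U then v i else 0) ≠ 0).card ≤ U.card := by
  apply Finset.card_le_card
  intro i hi
  rcases Finset.mem_filter.mp hi with ⟨-, h⟩
  by_contra hU
  simp [hU] at h

private lemma sqrtQ_le_phiMax' {d : ℕ} (r : ℕ) (A B : Matrix (Fin d) (Fin d) ℝ)
    (hB : A = Bᵀ * B) (x : Fin d → ℝ)
    (hx : (Finset.univ.filter fun i => x i ≠ 0).card ≤ r) :
    Real.sqrt (x ⬝ᵥ A.mulVec x) ≤ Real.sqrt (phiMax r A) * Real.sqrt (∑ i, x i ^ 2) := by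
  by_cases hx0 : x = 0
  · subst hx0
    simp only [zero_dotProduct, Real.sqrt_zero]
    positivity
  · have hpos : 0 < ∑ i, x i ^ 2 := sum_sq_pos' hx0
    have hQnn : ∀ y : Fin d → ℝ, 0 ≤ y ⬝ᵥ A.mulVec y := by
      intro y; rw [hB, quadform_eq']; positivity
    have hbdd : BddAbove {z : ℝ | ∃ v : Fin d → ℝ, v ≠ 0 ∧
        (Finset.univ.filter fun i => v i ≠ 0).card ≤ r ∧
        z = (v ⬝ᵥ A.mulVec v) / (∑ i, v i ^ 2)} := by
      refine ⟨∑ i, ∑ j, B i j ^ 2, ?_⟩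
      rintro z ⟨v, hv, -, rfl⟩
      have hvpos : 0 < ∑ i, v i ^ 2 := sum_sq_pos' hv
      have hQle : v ⬝ᵥ A.mulVec v ≤ (∑ i, ∑ j, B i j ^ 2) * ∑ j, v j ^ 2 := by
        rw [hB, quadform_eq', Finset.sum_mul]
        apply Finset.sum_le_sum
        intro i _
        have := Finset.sum_mul_sq_le_sq_mul_sq Finset.univ (fun j => B i j) v
        calc (B.mulVec v i) ^ 2 = (∑ j, B i j * v j) ^ 2 := by
              simp [Matrix.mulVec, dotProduct]
          _ ≤ (∑ j, B i j ^ 2) * ∑ j, v j ^ 2 := this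
      exact (div_le_iff₀ hvpos).mpr hQle
    have hmem : (x ⬝ᵥ A.mulVec x) / (∑ i, x i ^ 2) ∈ {z : ℝ | ∃ v : Fin d → ℝ, v ≠ 0 ∧
        (Finset.univ.filter fun i => v i ≠ 0).card ≤ r ∧
        z = (v ⬝ᵥ A.mulVec v) / (∑ i, v i ^ 2)} := ⟨x, hx0, hx, rfl⟩
    have hle : (x ⬝ᵥ A.mulVec x) / (∑ i, x i ^ 2) ≤ phiMax r A := le_csSup hbdd hmem
    have hphiMaxnn : 0 ≤ phiMax r A :=
      le_trans (div_nonneg (hQnn x) hpos.le) hle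
    have hQ : x ⬝ᵥ A.mulVec x ≤ phiMax r A * ∑ i, x i ^ 2 :=
      (div_le_iff₀ hpos).mp hle
    calc Real.sqrt (x ⬝ᵥ A.mulVec x) ≤ Real.sqrt (phiMax r A * ∑ i, x i ^ 2) :=
          Real.sqrt_le_sqrt hQ
      _ = _ := Real.sqrt_mul hphiMaxnn _

private lemma phiMin_le' {d : ℕ} (s : ℕ) (A : Matrix (Fin d) (Fin d) ℝ)
    (hA : A.PosSemidef) (x : Fin d → ℝ) (hx0 : x ≠ 0)
    (hx : (Finset.univ.filter fun i => x i ≠ 0).card ≤ s) :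
    phiMin s A * ∑ i, x i ^ 2 ≤ x ⬝ᵥ A.mulVec x := by
  have hbdd : BddBelow {z : ℝ | ∃ v : Fin d → ℝ, v ≠ 0 ∧
      (Finset.univ.filter fun i => v i ≠ 0).card ≤ s ∧
      z = (v ⬝ᵥ A.mulVec v) / (∑ i, v i ^ 2)} := by
    refine ⟨0, ?_⟩
    rintro z ⟨v, hv, -, rfl⟩
    have h1 : 0 ≤ v ⬝ᵥ A.mulVec v := by have := hA.dotProduct_mulVec_nonneg v; simpa using this
    exact div_nonneg h1 (sum_sq_pos' hv).le
  have hle : phiMin s A ≤ (x ⬝ᵥ A.mulVec x) / (∑ i, x i ^ 2) :=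
    csInf_le hbdd ⟨x, hx0, hx, rfl⟩
  exact (le_div_iff₀ (sum_sq_pos' hx0)).mp hle

private lemma block_bound' {d : ℕ} (r : ℕ) (A B : Matrix (Fin d) (Fin d) ℝ)
    (hB : A = Bᵀ * B) (hr : 1 ≤ r) (v : Fin d → ℝ) :
    ∀ n : ℕ, ∀ U : Finset (Fin d), U.card = n → ∀ m : ℝ, 0 ≤ m →
    (∀ j ∈ U, |v j| ≤ m) →
    Real.sqrt ((fun i => if i ∈ U then v i else 0) ⬝ᵥ
        A.mulVec (fun i => if i ∈ U then v i else 0))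
      ≤ Real.sqrt (phiMax r A) * ((r * m + ∑ j ∈ U, |v j|) / Real.sqrt r) := by
  intro n
  induction n using Nat.strong_induction_on with
  | _ n IH =>
    intro U hU m hm hbound
    have hrpos : (0:ℝ) < Real.sqrt r := Real.sqrt_pos.mpr (by exact_mod_cast hr)
    have habs_nn : (0:ℝ) ≤ ∑ j ∈ U, |v j| := Finset.sum_nonneg fun j _ => abs_nonneg _
    by_cases hcase : U.card ≤ r
    · -- base case
      have h1 : Real.sqrt ((fun i => if i ∈ U then v i else 0) ⬝ᵥ
          A.mulVec (fun i => if i ∈ U then v i else 0)) ≤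
          Real.sqrt (phiMax r A) * Real.sqrt (∑ i, (if i ∈ U then v i else 0) ^ 2) :=
        sqrtQ_le_phiMax' r A B hB _ (le_trans (restr_support' v U) hcase)
      have h2 : ∑ i, (if i ∈ U then v i else 0) ^ 2 ≤ (r : ℝ) * m ^ 2 := by
        rw [sum_sq_restr']
        calc ∑ i ∈ U, v i ^ 2 ≤ ∑ i ∈ U, m ^ 2 := by
              apply Finset.sum_le_sum
              intro i hi
              have := hbound i hi
              nlinarith [abs_nonneg (v i), sq_abs (v i)]
          _ = (U.card : ℝ) * m ^ 2 := by rw [Finset.sum_const, nsmul_eq_mul]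
          _ ≤ (r : ℝ) * m ^ 2 := by
              apply mul_le_mul_of_nonneg_right _ (sq_nonneg m)
              exact_mod_cast hcase
      have h3 : Real.sqrt (∑ i, (if i ∈ U then v i else 0) ^ 2) ≤ Real.sqrt r * m := by
        calc Real.sqrt (∑ i, (if i ∈ U then v i else 0) ^ 2) ≤
            Real.sqrt ((r : ℝ) * m ^ 2) := Real.sqrt_le_sqrt h2
          _ = Real.sqrt r * m := by
              rw [Real.sqrt_mul (by positivity), Real.sqrt_sq hm]
      have h4 : Real.sqrt r * m ≤ (r * m + ∑ j ∈ U, |v j|) / Real.sqrt r := by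
        rw [le_div_iff₀ hrpos]
        have : Real.sqrt r * m * Real.sqrt r = (r : ℝ) * m := by
          rw [mul_comm (Real.sqrt r * m), ← mul_assoc, Real.mul_self_sqrt (by positivity)]
        rw [this]
        linarith
      calc _ ≤ Real.sqrt (phiMax r A) * (Real.sqrt r * m) :=
            le_trans h1 (mul_le_mul_of_nonneg_left h3 (Real.sqrt_nonneg _))
        _ ≤ _ := mul_le_mul_of_nonneg_left h4 (Real.sqrt_nonneg _)
    · -- inductive step
      push_neg at hcase
      have hne : (U.powersetCard r).Nonempty :=
        Finset.powersetCard_nonempty.mpr hcase.le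
      obtain ⟨C, hCmem, hCmax⟩ := Finset.exists_max_image (U.powersetCard r)
        (fun W => ∑ j ∈ W, |v j|) hne
      rcases Finset.mem_powersetCard.mp hCmem with ⟨hCU, hCcard⟩
      have hCne : C.Nonempty := Finset.card_pos.mp (by omega)
      obtain ⟨i₀, hi₀C, hi₀min⟩ := Finset.exists_min_image C (fun i => |v i|) hCne
      -- every element outside C (in U) is at most the min of C
      have hkey : ∀ j ∈ U \ C, |v j| ≤ |v i₀| := by
        intro j hj
        rcases Finset.mem_sdiff.mp hj with ⟨hjU, hjC⟩
        by_contra hlt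
        push_neg at hlt
        have hjne : j ∉ C.erase i₀ := fun h => hjC (Finset.mem_of_mem_erase h)
        have hC'mem : insert j (C.erase i₀) ∈ U.powersetCard r := by
          rw [Finset.mem_powersetCard]
          constructor
          · intro x hx
            rcases Finset.mem_insert.mp hx with rfl | hx
            · exact hjU
            · exact hCU (Finset.mem_of_mem_erase hx)
          · rw [Finset.card_insert_of_notMem hjne, Finset.card_erase_of_mem hi₀C, hCcard]
            omega
        have hsum : ∑ x ∈ C, |v x| < ∑ x ∈ insert j (C.erase i₀), |v x| := by
          rw [Finset.sum_insert hjne]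
          have := Finset.sum_erase_add C (fun i => |v i|) hi₀C
          linarith
        exact absurd (hCmax _ hC'mem) (not_le.mpr hsum)
      -- split the restriction
      have hsplit : ∀ i, (if i ∈ U then v i else 0) =
          (if i ∈ C then v i else 0) + (if i ∈ U \ C then v i else 0) := by
        intro i
        by_cases hiC : i ∈ C
        · have hiU : i ∈ U := hCU hiC
          simp [hiC, hiU, Finset.mem_sdiff]
        · by_cases hiU : i ∈ U
          · simp [hiC, hiU, Finset.mem_sdiff]
          · simp [hiC, hiU, Finset.mem_sdiff]
      have htri : Real.sqrt ((fun i => if i ∈ U then v i else 0) ⬝ᵥ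
          A.mulVec (fun i => if i ∈ U then v i else 0)) ≤
          Real.sqrt ((fun i => if i ∈ C then v i else 0) ⬝ᵥ
            A.mulVec (fun i => if i ∈ C then v i else 0)) +
          Real.sqrt ((fun i => if i ∈ U \ C then v i else 0) ⬝ᵥ
            A.mulVec (fun i => if i ∈ U \ C then v i else 0)) := by
        rw [hB, quadform_eq', quadform_eq', quadform_eq']
        have heq : (fun i => if i ∈ U then v i else 0) =
            (fun i => if i ∈ C then v i else 0) + (fun i => if i ∈ U \ C then v i else 0) :=
          funext hsplit
        rw [heq, Matrix.mulVec_add]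
        exact sqrt_sum_sq_add' _ _
      -- bound the first part
      have hCbound : Real.sqrt ((fun i => if i ∈ C then v i else 0) ⬝ᵥ
          A.mulVec (fun i => if i ∈ C then v i else 0)) ≤
          Real.sqrt (phiMax r A) * ((r : ℝ) * m / Real.sqrt r) := by
        have h1 := sqrtQ_le_phiMax' r A B hB (fun i => if i ∈ C then v i else 0)
          (le_trans (restr_support' v C) hCcard.le)
        have h2 : ∑ i, (if i ∈ C then v i else 0) ^ 2 ≤ (r : ℝ) * m ^ 2 := by
          rw [sum_sq_restr']
          calc ∑ i ∈ C, v i ^ 2 ≤ ∑ i ∈ C, m ^ 2 := by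
                apply Finset.sum_le_sum
                intro i hi
                have := hbound i (hCU hi)
                nlinarith [abs_nonneg (v i), sq_abs (v i)]
            _ = (C.card : ℝ) * m ^ 2 := by rw [Finset.sum_const, nsmul_eq_mul]
            _ = (r : ℝ) * m ^ 2 := by rw [hCcard]
        have h3 : Real.sqrt (∑ i, (if i ∈ C then v i else 0) ^ 2) ≤ (r : ℝ) * m / Real.sqrt r := by
          calc Real.sqrt (∑ i, (if i ∈ C then v i else 0) ^ 2)
              ≤ Real.sqrt ((r : ℝ) * m ^ 2) := Real.sqrt_le_sqrt h2
            _ = Real.sqrt r * m := by rw [Real.sqrt_mul (by positivity), Real.sqrt_sq hm]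
            _ = (r : ℝ) * m / Real.sqrt r := by
                rw [eq_div_iff hrpos.ne']
                nlinarith [Real.mul_self_sqrt (show (0:ℝ) ≤ (r:ℝ) by positivity)]
        exact le_trans h1 (mul_le_mul_of_nonneg_left h3 (Real.sqrt_nonneg _))
      -- inductive hypothesis on U \ C
      have hcard' : (U \ C).card = n - r := by
        rw [Finset.card_sdiff_of_subset hCU, hU, hCcard]
      have hlt : n - r < n := by omega
      have hIH := IH (n - r) hlt (U \ C) hcard' |v i₀| (abs_nonneg _) hkey
      -- min times r is at most the sum over C
      have hmin : (r : ℝ) * |v i₀| ≤ ∑ j ∈ C, |v j| := by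
        have := Finset.card_nsmul_le_sum C (fun i => |v i|) |v i₀| (fun x hx => hi₀min x hx)
        rw [hCcard] at this
        simpa [nsmul_eq_mul] using this
      have hsdiff : ∑ j ∈ U \ C, |v j| + ∑ j ∈ C, |v j| = ∑ j ∈ U, |v j| :=
        Finset.sum_sdiff hCU
      calc Real.sqrt ((fun i => if i ∈ U then v i else 0) ⬝ᵥ
              A.mulVec (fun i => if i ∈ U then v i else 0))
          ≤ Real.sqrt (phiMax r A) * ((r : ℝ) * m / Real.sqrt r) +
            Real.sqrt (phiMax r A) * (((r : ℝ) * |v i₀| + ∑ j ∈ U \ C, |v j|) / Real.sqrt r) :=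
            le_trans htri (add_le_add hCbound hIH)
        _ ≤ Real.sqrt (phiMax r A) * ((↑r * m + ∑ j ∈ U, |v j|) / Real.sqrt r) := by
            rw [← mul_add]
            apply mul_le_mul_of_nonneg_left _ (Real.sqrt_nonneg _)
            rw [← add_div, div_le_div_iff₀ hrpos hrpos]
            apply mul_le_mul_of_nonneg_right _ hrpos.le
            linarith
/-- Bickel–Ritov–Tsybakov: a restricted eigenvalue condition implies that on the cone
`‖v(Sᶜ)‖₁ ≤ 3‖v(S)‖₁`, one has `vᵀAv ≥ κ²·‖v(S̃)‖₂²`, where `S̃` adjoins to `S` the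
`r` largest-in-absolute-value coordinates of `v` outside `S`. -/
theorem restricted_eigenvalue_recovery {d s₀ r : ℕ}
    (A : Matrix (Fin d) (Fin d) ℝ) (hA : A.PosSemidef)
    (hs₀r : s₀ ≤ r) (hsrd : s₀ + r ≤ d)
    (hκ : 0 < Real.sqrt (phiMin (s₀ + r) A) *
      (1 - 3 * Real.sqrt (s₀ * phiMax r A / (r * phiMin (s₀ + r) A)))) :
    ∀ S : Finset (Fin d), S.card ≤ s₀ →
    ∀ v : Fin d → ℝ, v ≠ 0 → (∑ i ∈ Sᶜ, |v i|) ≤ 3 * ∑ i ∈ S, |v i| →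
    ∀ T : Finset (Fin d), Disjoint S T → T.card = r →
      (∀ i ∈ T, ∀ j, j ∉ S → j ∉ T → |v j| ≤ |v i|) →
      (Real.sqrt (phiMin (s₀ + r) A) *
          (1 - 3 * Real.sqrt (s₀ * phiMax r A / (r * phiMin (s₀ + r) A)))) ^ 2 *
          (∑ i ∈ S ∪ T, v i ^ 2)
        ≤ v ⬝ᵥ A.mulVec v := by
  intro S hS v hv hcone T hdisj hTcard hTmax
  -- r ≥ 1
  have hr1 : 1 ≤ r := by
    by_contra h
    push_neg at h
    have hr0 : r = 0 := by omega
    have hs0 : s₀ + r = 0 := by omega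
    have hPzero : phiMin (s₀ + r) A = 0 := by
      unfold phiMin
      have : {x : ℝ | ∃ w : Fin d → ℝ, w ≠ 0 ∧
          (Finset.univ.filter fun i => w i ≠ 0).card ≤ s₀ + r ∧
          x = (w ⬝ᵥ A.mulVec w) / (∑ i, w i ^ 2)} = ∅ := by
        ext z
        simp only [Set.mem_setOf_eq, Set.mem_empty_iff_false, iff_false, not_exists]
        rintro w ⟨hw, hcard, -⟩
        apply hw
        funext i
        by_contra hwi
        have hmem : i ∈ Finset.univ.filter fun i => w i ≠ 0 :=
          Finset.mem_filter.mpr ⟨Finset.mem_univ i, hwi⟩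
        have : (Finset.univ.filter fun i => w i ≠ 0).card = 0 := by omega
        rw [Finset.card_eq_zero] at this
        rw [this] at hmem
        exact absurd hmem (Finset.notMem_empty i)
      rw [this, Real.sInf_empty]
    rw [hPzero] at hκ
    simp at hκ
  set P := phiMin (s₀ + r) A with hP
  set M := phiMax r A with hM
  set κ := Real.sqrt P * (1 - 3 * Real.sqrt (↑s₀ * M / (↑r * P))) with hκdef
  open scoped MatrixOrder in obtain ⟨B, hB0⟩ := CStarAlgebra.nonneg_iff_eq_star_mul_self.mp hA.nonneg
  have hB : A = Bᵀ * B := by simpa [Matrix.star_eq_conjTranspose] using hB0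
  have hQnn : ∀ y : Fin d → ℝ, 0 ≤ y ⬝ᵥ A.mulVec y := by
    intro y; rw [hB, quadform_eq']; positivity
  set u : Fin d → ℝ := fun i => if i ∈ S ∪ T then v i else 0 with hu
  by_cases hu0 : u = 0
  · have hzv : ∀ i ∈ S ∪ T, v i = 0 := by
      intro i hi
      have h0 := congrFun hu0 i
      rw [hu] at h0
      simpa [hi] using h0
    have hzero : ∑ i ∈ S ∪ T, v i ^ 2 = 0 :=
      Finset.sum_eq_zero fun i hi => by rw [hzv i hi]; ring
    rw [hzero, mul_zero]
    exact hQnn v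
  · -- main case
    set w : Fin d → ℝ := fun i => if i ∈ (S ∪ T)ᶜ then v i else 0 with hw
    have hvuw : ∀ i, u i = v i - w i := by
      intro i
      simp only [hu, hw, Finset.mem_compl]
      by_cases h : i ∈ S ∪ T <;> simp [h]
    -- positivity facts from hκ
    have hκ' : 0 < Real.sqrt P * (1 - 3 * Real.sqrt (↑s₀ * M / (↑r * P))) := hκ
    have hsPnn := Real.sqrt_nonneg P
    have hsP : 0 < Real.sqrt P := by
      rcases hsPnn.lt_or_eq with h | h
      · exact h
      · rw [← h] at hκ'; simp at hκ' 
    have hPpos : 0 < P := Real.sqrt_pos.mp hsP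
    have hrposR : (0:ℝ) < r := by exact_mod_cast hr1
    have hsrpos : 0 < Real.sqrt r := Real.sqrt_pos.mpr hrposR
    -- norm of u
    set nu := Real.sqrt (∑ i, u i ^ 2) with hnu
    have hnusq : nu ^ 2 = ∑ i ∈ S ∪ T, v i ^ 2 := by
      rw [hnu, Real.sq_sqrt (by positivity), hu, sum_sq_restr']
    have hnunn : 0 ≤ nu := Real.sqrt_nonneg _
    -- lower bound on sqrt (Q u)
    have hsupport : (Finset.univ.filter fun i => u i ≠ 0).card ≤ s₀ + r := by
      refine le_trans (restr_support' v (S ∪ T)) ?_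
      calc (S ∪ T).card ≤ S.card + T.card := Finset.card_union_le S T
        _ ≤ s₀ + r := by omega
    have hQu : P * ∑ i, u i ^ 2 ≤ u ⬝ᵥ A.mulVec u := phiMin_le' (s₀ + r) A hA u hu0 hsupport
    have hQulb : Real.sqrt P * nu ≤ Real.sqrt (u ⬝ᵥ A.mulVec u) := by
      calc Real.sqrt P * nu = Real.sqrt (P * ∑ i, u i ^ 2) := by
            rw [Real.sqrt_mul hPpos.le]
        _ ≤ Real.sqrt (u ⬝ᵥ A.mulVec u) := Real.sqrt_le_sqrt hQu
    -- upper bound on sqrt (Q w)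
    have hTne : T.Nonempty := Finset.card_pos.mp (by omega)
    obtain ⟨i₀, hi₀T, hi₀min⟩ := Finset.exists_min_image T (fun i => |v i|) hTne
    have hbound : ∀ j ∈ (S ∪ T)ᶜ, |v j| ≤ |v i₀| := by
      intro j hj
      rw [Finset.mem_compl, Finset.mem_union] at hj
      push_neg at hj
      exact hTmax i₀ hi₀T j hj.1 hj.2
    have hQwub := block_bound' r A B hB hr1 v ((S ∪ T)ᶜ).card (S ∪ T)ᶜ rfl
      |v i₀| (abs_nonneg _) hbound
    -- combine the ℓ¹ bounds
    have hmin : (r : ℝ) * |v i₀| ≤ ∑ j ∈ T, |v j| := by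
      have := Finset.card_nsmul_le_sum T (fun i => |v i|) |v i₀| (fun x hx => hi₀min x hx)
      rw [hTcard] at this
      simpa [nsmul_eq_mul] using this
    have hTsub : T ⊆ Sᶜ := fun i hi => Finset.mem_compl.mpr (Finset.disjoint_right.mp hdisj hi)
    have hcompl : (S ∪ T)ᶜ = Sᶜ \ T := by rw [Finset.compl_union, sdiff_eq, Finset.inf_eq_inter]
    have hsum3 : ∑ j ∈ Sᶜ \ T, |v j| + ∑ j ∈ T, |v j| = ∑ j ∈ Sᶜ, |v j| :=
      Finset.sum_sdiff hTsub
    -- Cauchy–Schwarz on S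
    have hCS : ∑ i ∈ S, |v i| ≤ Real.sqrt s₀ * nu := by
      have h1 : (∑ i ∈ S, |v i|) ^ 2 ≤ (S.card : ℝ) * ∑ i ∈ S, v i ^ 2 := by
        have := Finset.sum_mul_sq_le_sq_mul_sq S (fun _ => (1:ℝ)) (fun i => |v i|)
        simp only [one_pow, one_mul, Finset.sum_const, nsmul_eq_mul, mul_one] at this
        calc (∑ i ∈ S, |v i|) ^ 2 ≤ (S.card : ℝ) * ∑ i ∈ S, |v i| ^ 2 := this
          _ = (S.card : ℝ) * ∑ i ∈ S, v i ^ 2 := by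
              congr 1; exact Finset.sum_congr rfl fun i _ => sq_abs (v i)
      have h2 : (S.card : ℝ) * ∑ i ∈ S, v i ^ 2 ≤ (s₀ : ℝ) * ∑ i ∈ S ∪ T, v i ^ 2 := by
        apply mul_le_mul (by exact_mod_cast hS)
          (Finset.sum_le_sum_of_subset_of_nonneg Finset.subset_union_left
            (fun i _ _ => sq_nonneg _))
          (Finset.sum_nonneg fun i _ => sq_nonneg _) (by positivity)
      calc ∑ i ∈ S, |v i| = Real.sqrt ((∑ i ∈ S, |v i|) ^ 2) :=
            (Real.sqrt_sq (Finset.sum_nonneg fun i _ => abs_nonneg _)).symm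
        _ ≤ Real.sqrt ((s₀ : ℝ) * ∑ i ∈ S ∪ T, v i ^ 2) :=
            Real.sqrt_le_sqrt (le_trans h1 h2)
        _ = Real.sqrt s₀ * nu := by
            rw [Real.sqrt_mul (by positivity), ← hnusq, Real.sqrt_sq hnunn]
    have hl1 : (r : ℝ) * |v i₀| + ∑ j ∈ (S ∪ T)ᶜ, |v j| ≤ 3 * (Real.sqrt s₀ * nu) := by
      rw [hcompl]
      calc (r : ℝ) * |v i₀| + ∑ j ∈ Sᶜ \ T, |v j| ≤ ∑ j ∈ Sᶜ, |v j| := by linarith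
        _ ≤ 3 * ∑ i ∈ S, |v i| := hcone
        _ ≤ 3 * (Real.sqrt s₀ * nu) := by linarith
    have hQwub2 : Real.sqrt (w ⬝ᵥ A.mulVec w) ≤
        Real.sqrt M * (3 * (Real.sqrt s₀ * nu) / Real.sqrt r) := by
      refine le_trans hQwub ?_
      apply mul_le_mul_of_nonneg_left _ (Real.sqrt_nonneg _)
      rw [div_le_div_iff₀ hsrpos hsrpos]
      exact mul_le_mul_of_nonneg_right hl1 hsrpos.le
    -- triangle inequality
    have htri : Real.sqrt (u ⬝ᵥ A.mulVec u) ≤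
        Real.sqrt (v ⬝ᵥ A.mulVec v) + Real.sqrt (w ⬝ᵥ A.mulVec w) := by
      rw [hB, quadform_eq', quadform_eq', quadform_eq']
      have heq : B.mulVec u = fun i => B.mulVec v i + (- B.mulVec w) i := by
        have huvw : u = v - w := funext fun i => hvuw i
        rw [huvw, Matrix.mulVec_sub]
        funext i; simp [sub_eq_add_neg]
      rw [heq]
      refine le_trans (sqrt_sum_sq_add' (B.mulVec v) (- B.mulVec w)) ?_
      simp [neg_sq]
    -- key lower bound for sqrt (Q v)
    have hmain : Real.sqrt P * nu - Real.sqrt M * (3 * (Real.sqrt s₀ * nu) / Real.sqrt r) ≤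
        Real.sqrt (v ⬝ᵥ A.mulVec v) := by linarith
    -- κ ≤ √P − 3√M√s₀/√r
    have hkapp : κ ≤ Real.sqrt P - 3 * Real.sqrt M * Real.sqrt s₀ / Real.sqrt r := by
      rcases le_or_gt 0 M with hMnn | hMneg
      · have hid : Real.sqrt P * Real.sqrt (↑s₀ * M / (↑r * P)) =
            Real.sqrt s₀ * Real.sqrt M / Real.sqrt r := by
          rw [← Real.sqrt_mul hPpos.le]
          have harg : P * (↑s₀ * M / (↑r * P)) = ↑s₀ * (M / ↑r) := by
            field_simp
          rw [harg, Real.sqrt_mul (by positivity), Real.sqrt_div hMnn, mul_div_assoc]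
        rw [hκdef, mul_sub, mul_one, ← mul_assoc, mul_comm (Real.sqrt P) 3, mul_assoc, hid]
        have heq3 : 3 * (Real.sqrt ↑s₀ * Real.sqrt M / Real.sqrt ↑r) =
            3 * Real.sqrt M * Real.sqrt ↑s₀ / Real.sqrt ↑r := by ring
        rw [heq3]
      · have h1 : Real.sqrt M = 0 := Real.sqrt_eq_zero'.mpr hMneg.le
        have h2 : Real.sqrt (↑s₀ * M / (↑r * P)) = 0 := by
          apply Real.sqrt_eq_zero'.mpr
          apply div_nonpos_of_nonpos_of_nonneg
          · exact mul_nonpos_of_nonneg_of_nonpos (by positivity) hMneg.le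
          · positivity
        rw [hκdef, h1, h2]
        simp
    have hκpos : 0 < κ := hκ
    have hfin : κ * nu ≤ Real.sqrt (v ⬝ᵥ A.mulVec v) := by
      have h1 : κ * nu ≤ (Real.sqrt P - 3 * Real.sqrt M * Real.sqrt s₀ / Real.sqrt r) * nu :=
        mul_le_mul_of_nonneg_right hkapp hnunn
      have h2 : (Real.sqrt P - 3 * Real.sqrt M * Real.sqrt s₀ / Real.sqrt r) * nu =
          Real.sqrt P * nu - Real.sqrt M * (3 * (Real.sqrt s₀ * nu) / Real.sqrt r) := by
        ring
      linarith [hmain]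
    calc κ ^ 2 * (∑ i ∈ S ∪ T, v i ^ 2) = (κ * nu) ^ 2 := by
          rw [← hnusq]; ring
      _ ≤ Real.sqrt (v ⬝ᵥ A.mulVec v) ^ 2 := by
          apply pow_le_pow_left₀ (by positivity) hfin
      _ = v ⬝ᵥ A.mulVec v := Real.sq_sqrt (hQnn v)
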